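/- Assume the pair (ζ, n) satisfies condition (★) with respect to (m, v_0, v_1, ℓ, ζ⁰). Let X be an ADHM representation with dim V_∞ = 1, dim V_0 = v_0 and dim V_1 = v_1, and let F• be a full flag of V_1 of length N = v_1. Let S be a nonzero submodule of X with S_∞ = 0 and m·dim S_1 = (m+1)·dim S_0. Then μ_{ζ,n}(S) ≠ μ_{ζ,n}(X), and μ_{ζ,n}(S) < μ_{ζ,n}(X) holds if and only if S_1 ∩ F^ℓ = 0. -/

import Mathlib

open Module


section ADHMPrelim

/-- An ADHM representation on the blow-up quiver: vector spaces `V0, V1, Vinf` and maps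
`B1 B2 : V1 → V0`, `d : V0 → V1`, and `r`-tuples of maps `i : Vinf → V0`, `j : V1 → Vinf`
(encoding `i : Vinf ⊗ ℂ^r → V0` and `j : V1 → Vinf ⊗ ℂ^r`), satisfying the ADHM relation
`B1 ∘ d ∘ B2 - B2 ∘ d ∘ B1 + i ∘ j = 0`. -/
structure ADHMData (r : ℕ) (V0 V1 Vinf : Type*)
    [AddCommGroup V0] [Module ℂ V0] [AddCommGroup V1] [Module ℂ V1]
    [AddCommGroup Vinf] [Module ℂ Vinf] where
  B1 : V1 →ₗ[ℂ] V0
  B2 : V1 →ₗ[ℂ] V0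
  d : V0 →ₗ[ℂ] V1
  i : Fin r → (Vinf →ₗ[ℂ] V0)
  j : Fin r → (V1 →ₗ[ℂ] Vinf)
  rel : B1 ∘ₗ d ∘ₗ B2 - B2 ∘ₗ d ∘ₗ B1 + ∑ k : Fin r, (i k) ∘ₗ (j k) = 0

variable {r : ℕ} {V0 V1 Vinf : Type*}
  [AddCommGroup V0] [Module ℂ V0] [AddCommGroup V1] [Module ℂ V1]
  [AddCommGroup Vinf] [Module ℂ Vinf]

/-- A submodule of an ADHM representation: a triple of subspaces invariant under all the
structure maps. -/
structure ADHMSub (X : ADHMData r V0 V1 Vinf) where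
  S0 : Submodule ℂ V0
  S1 : Submodule ℂ V1
  Sinf : Submodule ℂ Vinf
  hB1 : ∀ x ∈ S1, X.B1 x ∈ S0
  hB2 : ∀ x ∈ S1, X.B2 x ∈ S0
  hd : ∀ x ∈ S0, X.d x ∈ S1
  hi : ∀ (k : Fin r), ∀ x ∈ Sinf, X.i k x ∈ S0
  hj : ∀ (k : Fin r), ∀ x ∈ S1, X.j k x ∈ Sinf

namespace ADHMSub

variable {X : ADHMData r V0 V1 Vinf}

/-- `rank S = dim S0 + dim S1 + dim S∞`, as a rational number. -/
noncomputable def rank (S : ADHMSub X) : ℚ :=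
  (finrank ℂ S.S0 : ℚ) + (finrank ℂ S.S1 : ℚ) + (finrank ℂ S.Sinf : ℚ)

/-- `ζ·vdim S = ζ₀ dim S0 + ζ₁ dim S1 + ζ∞ dim S∞`. -/
noncomputable def zdeg (ζ : ℚ × ℚ × ℚ) (S : ADHMSub X) : ℚ :=
  ζ.1 * (finrank ℂ S.S0 : ℚ) + ζ.2.1 * (finrank ℂ S.S1 : ℚ) + ζ.2.2 * (finrank ℂ S.Sinf : ℚ)

/-- The slope `μ_{ζ,n}(S)` of a submodule with respect to a flag `F` of length `N`. -/
noncomputable def mu (ζ : ℚ × ℚ × ℚ) (n : ℕ → ℚ) (N : ℕ) (F : ℕ → Submodule ℂ V1)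
    (S : ADHMSub X) : ℚ :=
  (S.zdeg ζ + ∑ k ∈ Finset.Icc 1 N, n k * (finrank ℂ ↥(S.S1 ⊓ F k) : ℚ)) / S.rank

/-- A submodule is nonzero if one of its components is nonzero. -/
def IsNonzero (S : ADHMSub X) : Prop := S.S0 ≠ ⊥ ∨ S.S1 ≠ ⊥ ∨ S.Sinf ≠ ⊥

/-- A submodule is proper if one of its components is a proper subspace. -/
def IsProper (S : ADHMSub X) : Prop := S.S0 ≠ ⊤ ∨ S.S1 ≠ ⊤ ∨ S.Sinf ≠ ⊤

end ADHMSub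

/-- The whole representation, viewed as a submodule of itself. -/
def ADHMData.top (X : ADHMData r V0 V1 Vinf) : ADHMSub X where
  S0 := ⊤
  S1 := ⊤
  Sinf := ⊤
  hB1 := fun _ _ => Submodule.mem_top
  hB2 := fun _ _ => Submodule.mem_top
  hd := fun _ _ => Submodule.mem_top
  hi := fun _ _ _ => Submodule.mem_top
  hj := fun _ _ _ => Submodule.mem_top

/-- A flag of `V1` of length `N`: increasing with 1-dimensional (or zero) steps. -/
structure IsFlag (N : ℕ) (F : ℕ → Submodule ℂ V1) : Prop where
  bot : F 0 = ⊥
  top : F N = ⊤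
  mono : ∀ k < N, F k ≤ F (k + 1)
  step : ∀ k < N, finrank ℂ ↥(F (k + 1)) ≤ finrank ℂ ↥(F k) + 1

/-- A full flag of `V1` of length `N`: increasing with exactly 1-dimensional steps. -/
structure IsFullFlag (N : ℕ) (F : ℕ → Submodule ℂ V1) : Prop where
  bot : F 0 = ⊥
  top : F N = ⊤
  mono : ∀ k < N, F k ≤ F (k + 1)
  dim : ∀ k ≤ N, finrank ℂ ↥(F k) = k

/-- `(ζ,n)`-stability of the pair `(X, F)`. -/
def PairStable (X : ADHMData r V0 V1 Vinf) (ζ : ℚ × ℚ × ℚ) (n : ℕ → ℚ) (N : ℕ)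
    (F : ℕ → Submodule ℂ V1) : Prop :=
  ∀ S : ADHMSub X, S.IsNonzero → S.IsProper → S.mu ζ n N F < X.top.mu ζ n N F

/-- `(ζ,n)`-semistability of the pair `(X, F)`. -/
def PairSemistable (X : ADHMData r V0 V1 Vinf) (ζ : ℚ × ℚ × ℚ) (n : ℕ → ℚ) (N : ℕ)
    (F : ℕ → Submodule ℂ V1) : Prop :=
  ∀ S : ADHMSub X, S.IsNonzero → S.IsProper → S.mu ζ n N F ≤ X.top.mu ζ n N F

namespace ADHMSub

variable {X : ADHMData r V0 V1 Vinf}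

/-- The ADHM representation obtained by restricting all structure maps to a submodule. -/
def subRep (S : ADHMSub X) : ADHMData r S.S0 S.S1 S.Sinf where
  B1 := X.B1.restrict S.hB1
  B2 := X.B2.restrict S.hB2
  d := X.d.restrict S.hd
  i := fun k => (X.i k).restrict (S.hi k)
  j := fun k => (X.j k).restrict (S.hj k)
  rel := by
    ext x
    have hx := LinearMap.congr_fun X.rel (x : V1)
    simp only [LinearMap.add_apply, LinearMap.sub_apply, LinearMap.coe_comp,
      Function.comp_apply, LinearMap.sum_apply, LinearMap.zero_apply] at hx
    simp only [LinearMap.add_apply, LinearMap.sub_apply, LinearMap.coe_comp,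
      Function.comp_apply, LinearMap.sum_apply, LinearMap.zero_apply,
      AddSubmonoidClass.coe_finset_sum, AddSubgroupClass.coe_sub, Submodule.coe_add,
      LinearMap.restrict_coe_apply, ZeroMemClass.coe_zero]
    exact hx

/-- The quotient ADHM representation of `X` by a submodule `S`. -/
def quotRep (S : ADHMSub X) : ADHMData r (V0 ⧸ S.S0) (V1 ⧸ S.S1) (Vinf ⧸ S.Sinf) where
  B1 := Submodule.mapQ S.S1 S.S0 X.B1 (fun x hx => S.hB1 x hx)
  B2 := Submodule.mapQ S.S1 S.S0 X.B2 (fun x hx => S.hB2 x hx)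
  d := Submodule.mapQ S.S0 S.S1 X.d (fun x hx => S.hd x hx)
  i := fun k => Submodule.mapQ S.Sinf S.S0 (X.i k) (fun x hx => S.hi k x hx)
  j := fun k => Submodule.mapQ S.S1 S.Sinf (X.j k) (fun x hx => S.hj k x hx)
  rel := by
    refine Submodule.linearMap_qext _ ?_
    ext x
    have hx := LinearMap.congr_fun X.rel x
    simp only [LinearMap.add_apply, LinearMap.sub_apply, LinearMap.coe_comp,
      Function.comp_apply, LinearMap.sum_apply, LinearMap.zero_apply] at hx
    simp only [LinearMap.add_apply, LinearMap.sub_apply, LinearMap.coe_comp,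
      Function.comp_apply, LinearMap.sum_apply, LinearMap.zero_apply,
      Submodule.mkQ_apply, Submodule.mapQ_apply]
    have hsum : (∑ k : Fin r, Submodule.Quotient.mk (p := S.S0) (X.i k (X.j k x)))
        = Submodule.Quotient.mk (∑ k : Fin r, X.i k (X.j k x)) := by
      rw [← Submodule.mkQ_apply, map_sum]
      simp [Submodule.mkQ_apply]
    rw [hsum, ← Submodule.Quotient.mk_sub, ← Submodule.Quotient.mk_add, hx,
      Submodule.Quotient.mk_zero]

end ADHMSub

end ADHMPrelim


section StarPrelim

/-- `ζ·s` for a triple of rationals and a triple of naturals. -/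
def zdot (z : ℚ × ℚ × ℚ) (s : ℕ × ℕ × ℕ) : ℚ :=
  z.1 * s.1 + z.2.1 * s.2.1 + z.2.2 * s.2.2

/-- `rank s = s₀ + s₁ + s∞`. -/
def srank (s : ℕ × ℕ × ℕ) : ℚ := (s.1 : ℚ) + (s.2.1 : ℚ) + (s.2.2 : ℚ)

/-- The finite set `D` of dimension triples `s ≠ 0` with `0 ≤ s₀ ≤ v₀`, `0 ≤ s₁ ≤ v₁`,
`s∞ ∈ {0,1}` and `ζ⁰·s ≠ 0`. -/
def Dset (v0 v1 : ℕ) (z0 : ℚ × ℚ × ℚ) : Finset (ℕ × ℕ × ℕ) :=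
  (Finset.Iic v0 ×ˢ Finset.Iic v1 ×ˢ Finset.Iic 1).filter
    (fun s => s ≠ (0, 0, 0) ∧ zdot z0 s ≠ 0)

/-- Condition (★) on the stability parameter `(ζ, n)`, relative to `(m, v₀, v₁, ℓ, ζ⁰)`. -/
def SatisfiesStar (m v0 v1 ℓ : ℕ) (z0 ζ : ℚ × ℚ × ℚ) (n : ℕ → ℚ) : Prop :=
  -- (a)
  ζ.1 * (v0 : ℚ) + ζ.2.1 * (v1 : ℚ) + ζ.2.2 = 0 ∧
  -- (b)
  (∀ k ∈ Finset.Icc 1 (v1 - 1),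
      ((v0 : ℚ) + (v1 : ℚ) + 1) * ∑ i ∈ Finset.Icc (k + 1) v1, (i : ℚ) * n i < n k ∧
      0 < ((v0 : ℚ) + (v1 : ℚ) + 1) * ∑ i ∈ Finset.Icc (k + 1) v1, (i : ℚ) * n i) ∧
  -- (c)
  (∀ s ∈ Dset v0 v1 z0, ∀ s' ∈ Dset v0 v1 z0,
      |zdot z0 s - zdot ζ s| / srank s + ∑ i ∈ Finset.Icc 1 v1, (i : ℚ) * n i
        < |zdot z0 s'| / srank s') ∧
  -- (d)
  (0 < (∑ i ∈ Finset.Icc 1 ℓ, (i : ℚ) * n i)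
        - (((v0 : ℚ) + (v1 : ℚ) + 1) / (2 * (m : ℚ) + 1))
          * ((m : ℚ) * ζ.1 + ((m : ℚ) + 1) * ζ.2.1) ∧
   (∑ i ∈ Finset.Icc 1 ℓ, (i : ℚ) * n i)
        - (((v0 : ℚ) + (v1 : ℚ) + 1) / (2 * (m : ℚ) + 1))
          * ((m : ℚ) * ζ.1 + ((m : ℚ) + 1) * ζ.2.1) < n ℓ) ∧
  -- (e)
  ((v0 : ℚ) + (v1 : ℚ) + 1) * ∑ i ∈ Finset.Icc (ℓ + 1) v1, (i : ℚ) * n i <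
      min ((∑ i ∈ Finset.Icc 1 ℓ, (i : ℚ) * n i)
            - (((v0 : ℚ) + (v1 : ℚ) + 1) / (2 * (m : ℚ) + 1))
              * ((m : ℚ) * ζ.1 + ((m : ℚ) + 1) * ζ.2.1))
          ((n ℓ - ∑ i ∈ Finset.Icc 1 ℓ, (i : ℚ) * n i)
            + (((v0 : ℚ) + (v1 : ℚ) + 1) / (2 * (m : ℚ) + 1))
              * ((m : ℚ) * ζ.1 + ((m : ℚ) + 1) * ζ.2.1))

end StarPrelim

/-- Under condition (★): for a nonzero submodule `S` with `S∞ = 0` lying on the wall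
`m·dim S₁ = (m+1)·dim S₀`, the slope of `S` never equals that of `X`, and it is smaller
iff `S₁ ∩ F^ℓ = 0`. -/
theorem mu_lt_iff_inf_flag_trivial
    (r m v0 v1 ℓ : ℕ) (hr : 1 ≤ r) (hv0 : 1 ≤ v0) (hv1 : 1 ≤ v1)
    (hℓ : ℓ ∈ Finset.Icc 1 v1)
    (z0 ζ : ℚ × ℚ × ℚ) (n : ℕ → ℚ)
    (hz0 : z0.1 < 0)
    (hwall : (m : ℚ) * z0.1 + ((m : ℚ) + 1) * z0.2.1 = 0)
    (hnorm : z0.1 * (v0 : ℚ) + z0.2.1 * (v1 : ℚ) + z0.2.2 = 0)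
    (hn : ∀ k ∈ Finset.Icc 1 v1, 0 < n k)
    (hstar : SatisfiesStar m v0 v1 ℓ z0 ζ n)
    {V0 V1 Vinf : Type*} [AddCommGroup V0] [Module ℂ V0] [FiniteDimensional ℂ V0]
    [AddCommGroup V1] [Module ℂ V1] [FiniteDimensional ℂ V1]
    [AddCommGroup Vinf] [Module ℂ Vinf] [FiniteDimensional ℂ Vinf]
    (X : ADHMData r V0 V1 Vinf)
    (hV0 : finrank ℂ V0 = v0) (hV1 : finrank ℂ V1 = v1) (hVinf : finrank ℂ Vinf = 1)
    (F : ℕ → Submodule ℂ V1) (hF : IsFullFlag v1 F)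
    (S : ADHMSub X) (hSnz : S.IsNonzero) (hSinf : S.Sinf = ⊥)
    (hSwall : (m : ℤ) * (finrank ℂ S.S1 : ℤ) = ((m : ℤ) + 1) * (finrank ℂ S.S0 : ℤ)) :
    S.mu ζ n v1 F ≠ X.top.mu ζ n v1 F ∧
    (S.mu ζ n v1 F < X.top.mu ζ n v1 F ↔ S.S1 ⊓ F ℓ = ⊥) := by
  classical
  obtain ⟨hA0, hAn⟩ := hstar.2.2.2.1
  have hE := hstar.2.2.2.2
  have ha := hstar.1
  obtain ⟨hℓ1, hℓv⟩ := Finset.mem_Icc.mp hℓ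
  set w : ℚ := (m : ℚ) * ζ.1 + ((m : ℚ) + 1) * ζ.2.1 with hwdef
  set rkq : ℚ := (v0 : ℚ) + (v1 : ℚ) + 1 with hrkqdef
  set A : ℚ := (∑ i ∈ Finset.Icc 1 ℓ, (i : ℚ) * n i) - (rkq / (2 * (m : ℚ) + 1)) * w with hAdef
  set R : ℚ := ∑ i ∈ Finset.Icc (ℓ + 1) v1, (i : ℚ) * n i with hRdef
  have hE1 : rkq * R < A := lt_of_lt_of_le hE (min_le_left _ _)
  have hE2 : rkq * R < n ℓ - A := by
    have := lt_of_lt_of_le hE (min_le_right _ _)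
    rw [hAdef]; linarith
  clear_value w rkq A R
  set s0 := finrank ℂ S.S0 with hs0def
  set s1 := finrank ℂ S.S1 with hs1def
  clear_value s0 s1
  have hsinf : finrank ℂ S.Sinf = 0 := by rw [hSinf]; exact finrank_bot ℂ Vinf
  have hs0v : s0 ≤ v0 := by rw [hs0def, ← hV0]; exact Submodule.finrank_le S.S0
  have hs1v : s1 ≤ v1 := by rw [hs1def, ← hV1]; exact Submodule.finrank_le S.S1
  have hS1ne : S.S1 ≠ ⊥ := by
    intro hb
    have h1 : s1 = 0 := by rw [hs1def, hb, finrank_bot]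
    have h2 : ((m : ℤ) + 1) * (s0 : ℤ) = 0 := by rw [← hSwall, h1]; simp
    have h3 : (s0 : ℤ) = 0 := by
      rcases mul_eq_zero.mp h2 with h | h
      · omega
      · exact h
    have h0 : finrank ℂ S.S0 = 0 := by rw [← hs0def]; exact_mod_cast h3
    have hb0 : S.S0 = ⊥ := Submodule.finrank_eq_zero.mp h0
    rcases hSnz with h | h | h
    · exact h hb0
    · exact h hb
    · exact h hSinf
  have hs1pos : 1 ≤ s1 := by
    rcases Nat.eq_zero_or_pos s1 with h | h
    · exact absurd (Submodule.finrank_eq_zero.mp (hs1def ▸ h)) hS1ne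
    · exact h
  -- wall relation in ℚ
  have hwq : (m : ℚ) * (s1 : ℚ) = ((m : ℚ) + 1) * (s0 : ℚ) := by exact_mod_cast hSwall
  have h2m : (2 * (m : ℚ) + 1) ≠ 0 := by positivity
  have hzd : (2 * (m : ℚ) + 1) * (ζ.1 * (s0 : ℚ) + ζ.2.1 * (s1 : ℚ)) = ((s0 : ℚ) + s1) * w := by
    rw [hwdef]; linear_combination (ζ.2.1 - ζ.1) * hwq
  -- flag facts
  have hFmono : ∀ a b : ℕ, a ≤ b → b ≤ v1 → F a ≤ F b := by
    intro a b hab hbv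
    induction b with
    | zero => exact le_of_eq (by rw [Nat.le_zero.mp hab])
    | succ b ih =>
      rcases Nat.eq_or_lt_of_le hab with h | h
      · exact le_of_eq (by rw [h])
      · exact le_trans (ih (Nat.lt_succ_iff.mp h) (le_trans (Nat.le_succ b) hbv))
          (hF.mono b (lt_of_lt_of_le (Nat.lt_succ_self b) hbv))
  have hfk_le : ∀ k ≤ v1, finrank ℂ ↥(S.S1 ⊓ F k) ≤ k := fun k hk =>
    le_trans (Submodule.finrank_mono inf_le_right) (le_of_eq (hF.dim k hk))
  -- sum splitting
  have hsplit : ∀ g : ℕ → ℚ, (∑ k ∈ Finset.Icc 1 v1, g k)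
      = (∑ k ∈ Finset.Icc 1 ℓ, g k) + ∑ k ∈ Finset.Icc (ℓ + 1) v1, g k := by
    intro g
    rw [show (1 : ℕ) = 0 + 1 from rfl, Finset.Icc_add_one_left_eq_Ioc, Finset.Icc_add_one_left_eq_Ioc, show ℓ + (0 + 1) = ℓ + 1 from rfl, Finset.Icc_add_one_left_eq_Ioc,
      Finset.sum_Ioc_consecutive g (Nat.zero_le ℓ) hℓv]
  -- abbreviations for the slope data
  set Φ : ℚ := ∑ k ∈ Finset.Icc 1 v1, n k * (finrank ℂ ↥(S.S1 ⊓ F k) : ℚ) with hΦdef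
  set T : ℚ := ∑ k ∈ Finset.Icc 1 v1, (k : ℚ) * n k with hTdef
  clear_value Φ T
  have hTsplit : T = (∑ i ∈ Finset.Icc 1 ℓ, (i : ℚ) * n i) + R := by
    rw [hTdef, hRdef]; exact hsplit _
  have hRnn : 0 ≤ R := by
    rw [hRdef]
    refine Finset.sum_nonneg fun i hi => ?_
    obtain ⟨h1, h2⟩ := Finset.mem_Icc.mp hi
    exact mul_nonneg (Nat.cast_nonneg i) (le_of_lt (hn i (Finset.mem_Icc.mpr ⟨by omega, h2⟩)))
  have hrkpos : (0 : ℚ) < rkq := by rw [hrkqdef]; positivity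
  have hrkge : (1 : ℚ) ≤ rkq := by
    rw [hrkqdef]
    have h1 : (0 : ℚ) ≤ (v0 : ℚ) := Nat.cast_nonneg v0
    have h2 : (0 : ℚ) ≤ (v1 : ℚ) := Nat.cast_nonneg v1
    linarith
  have hs1geQ : (1 : ℚ) ≤ (s1 : ℚ) := by exact_mod_cast hs1pos
  have hs0nn : (0 : ℚ) ≤ (s0 : ℚ) := Nat.cast_nonneg s0
  have hspos : (0 : ℚ) < (s0 : ℚ) + s1 := by linarith
  have hs1ge : (1 : ℚ) ≤ (s0 : ℚ) + s1 := by linarith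
  have hsle : (s0 : ℚ) + s1 ≤ rkq - 1 := by
    have h1 : (s0 : ℚ) ≤ v0 := by exact_mod_cast hs0v
    have h2 : (s1 : ℚ) ≤ v1 := by exact_mod_cast hs1v
    rw [hrkqdef]; linarith
  -- slope formulas
  have hmuS : S.mu ζ n v1 F = (ζ.1 * (s0 : ℚ) + ζ.2.1 * (s1 : ℚ) + Φ) / ((s0 : ℚ) + s1) := by
    simp only [ADHMSub.mu, ADHMSub.zdeg, ADHMSub.rank, ← hs0def, ← hs1def, hsinf,
      Nat.cast_zero, mul_zero, add_zero, ← hΦdef]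
  have hmuX : X.top.mu ζ n v1 F = T / rkq := by
    have e0 : finrank ℂ X.top.S0 = finrank ℂ V0 := finrank_top ℂ V0
    have e1 : finrank ℂ X.top.S1 = finrank ℂ V1 := finrank_top ℂ V1
    have e2 : finrank ℂ X.top.Sinf = finrank ℂ Vinf := finrank_top ℂ Vinf
    have h1 : X.top.zdeg ζ = 0 := by
      simp only [ADHMSub.zdeg, e0, e1, e2, hV0, hV1, hVinf, Nat.cast_one, mul_one]
      exact ha
    have h2 : X.top.rank = rkq := by
      simp only [ADHMSub.rank, e0, e1, e2, hV0, hV1, hVinf, hrkqdef]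
      push_cast; ring
    have h3 : (∑ k ∈ Finset.Icc 1 v1, n k * (finrank ℂ ↥((ADHMData.top X).S1 ⊓ F k) : ℚ)) = T := by
      rw [hTdef]
      refine Finset.sum_congr rfl fun k hk => ?_
      obtain ⟨_, hk2⟩ := Finset.mem_Icc.mp hk
      rw [show (ADHMData.top X).S1 = ⊤ from rfl, top_inf_eq, hF.dim k hk2, mul_comm]
    rw [ADHMSub.mu, h1, h2, h3, zero_add]
  -- key algebraic identity
  have hkey : ((s0 : ℚ) + s1) * T - rkq * (ζ.1 * (s0 : ℚ) + ζ.2.1 * (s1 : ℚ))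
      = ((s0 : ℚ) + s1) * (A + R) := by
    rw [hAdef, hTsplit]
    field_simp
    linear_combination (-rkq) * hzd
  -- the two cases
  have hltcase : S.S1 ⊓ F ℓ = ⊥ → S.mu ζ n v1 F < X.top.mu ζ n v1 F := by
    intro hb
    have hΦR : Φ ≤ R := by
      rw [hΦdef, hsplit (fun k => n k * (finrank ℂ ↥(S.S1 ⊓ F k) : ℚ))]
      have hz : (∑ k ∈ Finset.Icc 1 ℓ, n k * (finrank ℂ ↥(S.S1 ⊓ F k) : ℚ)) = 0 := by
        refine Finset.sum_eq_zero fun k hk => ?_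
        obtain ⟨hk1, hk2⟩ := Finset.mem_Icc.mp hk
        have : S.S1 ⊓ F k = ⊥ := by
          rw [← le_bot_iff, ← hb]
          exact inf_le_inf_left _ (hFmono k ℓ hk2 hℓv)
        rw [this, finrank_bot, Nat.cast_zero, mul_zero]
      rw [hz, zero_add, hRdef]
      refine Finset.sum_le_sum fun k hk => ?_
      obtain ⟨hk1, hk2⟩ := Finset.mem_Icc.mp hk
      have hnk := le_of_lt (hn k (Finset.mem_Icc.mpr ⟨by omega, hk2⟩))
      have hfk : (finrank ℂ ↥(S.S1 ⊓ F k) : ℚ) ≤ (k : ℚ) := by exact_mod_cast hfk_le k hk2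
      calc n k * (finrank ℂ ↥(S.S1 ⊓ F k) : ℚ) ≤ n k * k :=
            mul_le_mul_of_nonneg_left hfk hnk
        _ = (k : ℚ) * n k := mul_comm _ _
    rw [hmuS, hmuX, div_lt_div_iff₀ hspos hrkpos]
    have c1 : rkq * Φ ≤ rkq * R := mul_le_mul_of_nonneg_left hΦR (le_of_lt hrkpos)
    have c3 : (0 : ℚ) ≤ ((s0 : ℚ) + s1 - 1) * A := mul_nonneg (by linarith) (le_of_lt hA0)
    have c4 : (0 : ℚ) ≤ ((s0 : ℚ) + s1) * R := mul_nonneg (le_of_lt hspos) hRnn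
    linarith [hkey, c1, hE1, c3, c4]
  have hgtcase : S.S1 ⊓ F ℓ ≠ ⊥ → X.top.mu ζ n v1 F < S.mu ζ n v1 F := by
    intro hb
    have hfl : 1 ≤ finrank ℂ ↥(S.S1 ⊓ F ℓ) := by
      rcases Nat.eq_zero_or_pos (finrank ℂ ↥(S.S1 ⊓ F ℓ)) with h | h
      · exact absurd (Submodule.finrank_eq_zero.mp h) hb
      · exact h
    have hnℓ := hn ℓ hℓ
    have hΦℓ : n ℓ ≤ Φ := by
      have h1 : n ℓ * (finrank ℂ ↥(S.S1 ⊓ F ℓ) : ℚ) ≤ Φ := by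
        rw [hΦdef]
        refine Finset.single_le_sum (f := fun k => n k * (finrank ℂ ↥(S.S1 ⊓ F k) : ℚ)) (fun k hk => ?_) hℓ
        exact mul_nonneg (le_of_lt (hn k hk)) (Nat.cast_nonneg _)
      have h2 : n ℓ ≤ n ℓ * (finrank ℂ ↥(S.S1 ⊓ F ℓ) : ℚ) :=
        le_mul_of_one_le_right (le_of_lt hnℓ) (by exact_mod_cast hfl)
      linarith
    rw [hmuS, hmuX, div_lt_div_iff₀ hrkpos hspos]
    have hAR : A + R < n ℓ := by
      have := mul_le_mul_of_nonneg_right hrkge hRnn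
      linarith
    have hARnn : (0 : ℚ) ≤ A + R := by linarith
    have c1 : ((s0 : ℚ) + s1) * (A + R) ≤ (rkq - 1) * (A + R) :=
      mul_le_mul_of_nonneg_right hsle hARnn
    have c2 : rkq * (A + R) < rkq * Φ :=
      mul_lt_mul_of_pos_left (by linarith) hrkpos
    linarith [hkey, c1, c2]
  constructor
  · by_cases h : S.S1 ⊓ F ℓ = ⊥
    · exact ne_of_lt (hltcase h)
    · exact ne_of_gt (hgtcase h)
  · constructor
    · intro hlt
      by_contra h
      exact absurd hlt (not_lt.mpr (le_of_lt (hgtcase h)))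
    · exact hltcase
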